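/- Let 1<p<∞, let ρ:[0,∞)→(0,∞) be a differentiable probability density, and let ν:[0,1)→[0,∞) be an increasing twice differentiable bijection with ν(0)=0 and ν(t)→∞ as t→1. If ‖h_{1,p*}‖_{L_∞(0,1)}<∞ and ‖h_{2,p*}‖_{L_p(0,1)}<∞, then for every f∈F_{1,p}(ℝ_+) the function g_{f,ν} belongs to W_{1,p} and ‖g_{f,ν}'‖_{L_p(0,1)} ≤ (‖h_{1,p*}‖_{L_∞(0,1)} + ‖h_{2,p*}‖_{L_p(0,1)})·‖f'‖_{L_p(0,∞)}. -/

import Mathlib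

open MeasureTheory Set Filter ENNReal Topology

/-- One-dimensional change of variables for the Lebesgue integral. -/
theorem lintegral_image_eq_lintegral_abs_deriv_mul' {s : Set ℝ} {f f' : ℝ → ℝ}
    (hs : MeasurableSet s) (hf' : ∀ x ∈ s, HasDerivWithinAt f (f' x) s x)
    (hf : InjOn f s) (g : ℝ → ℝ≥0∞) :
    ∫⁻ x in f '' s, g x = ∫⁻ x in s, ENNReal.ofReal |f' x| * g (f x) := by
  simpa only [ContinuousLinearMap.det_toSpanSingleton] using
    lintegral_image_eq_lintegral_abs_det_fderiv_mul volume hs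
      (fun x hx => (hf' x hx).hasFDerivWithinAt) hf g


/-- **Theorem 2(ii), `1 < p < ∞`.** Let `1 < p < ∞` with conjugate exponent
`p*` (`1/p* = 1 - 1/p = q`), `ρ` a differentiable positive probability density on `[0,∞)`,
and `ν : [0,1) → [0,∞)` an increasing twice differentiable bijection with `ν(0) = 0` and
`ν(t) → ∞` as `t → 1⁻`.  With `h_{1,p*}(t) = ρ(ν(t)) (ν'(t))^{1+1/p*}` and
`h_{2,p*}(t) = (d/dt)[ρ(ν(t)) ν'(t)] (ν(t))^{1/p*}`
(the derivative being `ρ'(ν(t)) ν'(t)² + ρ(ν(t)) ν''(t)`),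
if `‖h_{1,p*}‖_{L_∞(0,1)} < ∞` and `‖h_{2,p*}‖_{L_p(0,1)} < ∞`, then for every
`f ∈ F_{1,p}(ℝ₊)` the function `g_{f,ν}(t) = f(ν(t)) ρ(ν(t)) ν'(t)` belongs to `W_{1,p}`
with `‖g_{f,ν}'‖_{L_p(0,1)} ≤ (‖h_{1,p*}‖_{L_∞(0,1)} + ‖h_{2,p*}‖_{L_p(0,1)}) ‖f'‖_{L_p(0,∞)}`. -/
theorem transformed_integrand_in_W1p
    (p q : ℝ) (hp : 1 < p) (hq : q = 1 - 1 / p)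
    (ρ ρ' : ℝ → ℝ) (hρ_pos : ∀ x, 0 ≤ x → 0 < ρ x)
    (hρ_deriv : ∀ x, 0 ≤ x → HasDerivAt ρ (ρ' x) x)
    (hρ_int : IntegrableOn ρ (Ioi 0))
    (hρ_prob : ∫ x in Ioi (0:ℝ), ρ x = 1)
    (ν ν' ν'' : ℝ → ℝ)
    (hν0 : ν 0 = 0)
    (hν_mono : StrictMonoOn ν (Ico 0 1))
    (hν_maps : MapsTo ν (Ico (0:ℝ) 1) (Ici 0))
    (hν_surj : SurjOn ν (Ico (0:ℝ) 1) (Ici 0))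
    (hν_deriv : ∀ t ∈ Ico (0:ℝ) 1, HasDerivAt ν (ν' t) t)
    (hν_deriv2 : ∀ t ∈ Ico (0:ℝ) 1, HasDerivAt ν' (ν'' t) t)
    (hν_tendsto : Tendsto ν (nhdsWithin 1 (Iio 1)) atTop)
    (h₁ h₂ : ℝ → ℝ)
    (hh₁ : ∀ t, h₁ t = ρ (ν t) * ν' t ^ (1 + q))
    (hh₂ : ∀ t, h₂ t = (ρ' (ν t) * ν' t ^ 2 + ρ (ν t) * ν'' t) * ν t ^ q)
    (hh₁_fin : eLpNorm h₁ ⊤ (volume.restrict (Ioo (0:ℝ) 1)) < ⊤)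
    (hh₂_fin : eLpNorm h₂ (ENNReal.ofReal p) (volume.restrict (Ioo (0:ℝ) 1)) < ⊤)
    (f f' : ℝ → ℝ)
    (hf0 : f 0 = 0)
    (hf_int : ∀ x, 0 < x → IntervalIntegrable f' volume 0 x)
    (hf_repr : ∀ x, 0 ≤ x → f x = ∫ s in (0:ℝ)..x, f' s)
    (hf'Lp : MemLp f' (ENNReal.ofReal p) (volume.restrict (Ioi 0)))
    (g : ℝ → ℝ) (hg : ∀ t, g t = f (ν t) * ρ (ν t) * ν' t) :
    g 0 = 0 ∧
    ∃ g' : ℝ → ℝ,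
      (∀ t ∈ Ico (0:ℝ) 1, IntervalIntegrable g' volume 0 t ∧
        g t = ∫ s in (0:ℝ)..t, g' s) ∧
      eLpNorm g' (ENNReal.ofReal p) (volume.restrict (Ioo (0:ℝ) 1)) ≤
        (eLpNorm h₁ ⊤ (volume.restrict (Ioo (0:ℝ) 1)) +
          eLpNorm h₂ (ENNReal.ofReal p) (volume.restrict (Ioo (0:ℝ) 1))) *
          eLpNorm f' (ENNReal.ofReal p) (volume.restrict (Ioi 0)) ∧
      eLpNorm g' (ENNReal.ofReal p) (volume.restrict (Ioo (0:ℝ) 1)) < ⊤ := by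
  -- basic numerology
  have hp0 : (0:ℝ) < p := lt_trans one_pos hp
  have hinvp : 0 < 1 / p := by positivity
  have hinvp1 : 1 / p < 1 := by
    rw [div_lt_one hp0]; exact hp
  have hq0 : 0 < q := by rw [hq]; linarith
  have hq1 : q < 1 := by rw [hq]; linarith
  have hq' : 1 - q = 1 / p := by rw [hq]; ring
  set P : ℝ≥0∞ := ENNReal.ofReal p with hPdef
  have hPtoReal : P.toReal = p := toReal_ofReal hp0.le
  have hP0 : P ≠ 0 := (ENNReal.ofReal_pos.2 hp0).ne'
  have hPtop : P ≠ ⊤ := ofReal_ne_top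
  have hP1 : (1:ℝ≥0∞) ≤ P := by
    rw [hPdef, ← ENNReal.ofReal_one]; exact ENNReal.ofReal_le_ofReal hp.le
  set μ01 := volume.restrict (Ioo (0:ℝ) 1) with hμ01
  haveI : IsFiniteMeasure μ01 := ⟨by simp [hμ01, Real.volume_Ioo]⟩
  set C₁ := eLpNorm h₁ ⊤ μ01 with hC₁
  set C₂ := eLpNorm h₂ P μ01 with hC₂
  set Nf := eLpNorm f' P (volume.restrict (Ioi 0)) with hNf
  have hNftop : Nf ≠ ⊤ := hf'Lp.2.ne
  have hC₁top : C₁ ≠ ⊤ := hh₁_fin.ne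
  have hC₂top : C₂ ≠ ⊤ := hh₂_fin.ne
  -- measurable representative of f'
  set F := (hf'Lp.1.mk f') with hFdef
  have hFmeas : StronglyMeasurable F := hf'Lp.1.stronglyMeasurable_mk
  have hFae : f' =ᵐ[volume.restrict (Ioi 0)] F := hf'Lp.1.ae_eq_mk
  have hFLp : MemLp F P (volume.restrict (Ioi 0)) :=
    ⟨hFmeas.aestronglyMeasurable, by rw [← eLpNorm_congr_ae hFae]; exact hf'Lp.2⟩
  have hNF : eLpNorm F P (volume.restrict (Ioi 0)) = Nf := (eLpNorm_congr_ae hFae).symm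
  -- basic facts about ν
  have hνcont : ContinuousOn ν (Ico 0 1) :=
    fun t ht => (hν_deriv t ht).continuousAt.continuousWithinAt
  have hν'cont : ContinuousOn ν' (Ico 0 1) :=
    fun t ht => (hν_deriv2 t ht).continuousAt.continuousWithinAt
  have hνnonneg : ∀ t ∈ Ico (0:ℝ) 1, 0 ≤ ν t := fun t ht => hν_maps ht
  have h0mem : (0:ℝ) ∈ Ico (0:ℝ) 1 := ⟨le_rfl, one_pos⟩
  have hνpos : ∀ t ∈ Ioo (0:ℝ) 1, 0 < ν t := by
    intro t ht
    have := hν_mono h0mem ⟨ht.1.le, ht.2⟩ ht.1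
    rwa [hν0] at this
  have hν'nonneg : ∀ t ∈ Ico (0:ℝ) 1, 0 ≤ ν' t := by
    intro t ht
    have hd : HasDerivWithinAt ν (ν' t) (Ioo t 1) t := (hν_deriv t ht).hasDerivWithinAt
    haveI hne : (𝓝[Ioo t 1] t).NeBot := left_nhdsWithin_Ioo_neBot ht.2
    have hslope := (hasDerivWithinAt_iff_tendsto_slope' (notMem_Ioo_of_le le_rfl)).1 hd
    refine ge_of_tendsto hslope ?_
    filter_upwards [self_mem_nhdsWithin] with u hu
    have hu1 : u ∈ Ico (0:ℝ) 1 := ⟨ht.1.trans hu.1.le, hu.2⟩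
    rw [slope_def_field]
    apply div_nonneg
    · exact sub_nonneg.2 (hν_mono ht hu1 hu.1).le
    · exact sub_nonneg.2 hu.1.le
  -- images of intervals under ν
  have himg : ∀ t ∈ Ioo (0:ℝ) 1, ν '' Ioo 0 t = Ioo 0 (ν t) := by
    intro t ht
    ext y
    constructor
    · rintro ⟨s, hs, rfl⟩
      have hs1 : s ∈ Ico (0:ℝ) 1 := ⟨hs.1.le, hs.2.trans ht.2⟩
      exact ⟨hνpos s ⟨hs.1, hs.2.trans ht.2⟩, hν_mono hs1 ⟨ht.1.le, ht.2⟩ hs.2⟩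
    · rintro ⟨hy0, hyt⟩
      obtain ⟨s, hs, rfl⟩ := hν_surj (le_of_lt hy0)
      refine ⟨s, ⟨?_, ?_⟩, rfl⟩
      · rcases hs.1.lt_or_eq with h | h
        · exact h
        · exfalso; rw [← h, hν0] at hy0; exact lt_irrefl _ hy0
      · by_contra hcon
        push_neg at hcon
        exact absurd (hν_mono.monotoneOn ⟨ht.1.le, ht.2⟩ hs hcon) (not_le.2 hyt)
  have himg1 : ν '' Ioo 0 1 = Ioi 0 := by
    ext y
    constructor
    · rintro ⟨s, hs, rfl⟩
      exact hνpos s hs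
    · intro hy
      obtain ⟨s, hs, rfl⟩ := hν_surj (mem_Ici.2 (le_of_lt (mem_Ioi.1 hy)))
      refine ⟨s, ⟨?_, hs.2⟩, rfl⟩
      rcases hs.1.lt_or_eq with h | h
      · exact h
      · exfalso; rw [← h, hν0] at hy; exact lt_irrefl _ (mem_Ioi.1 hy)

  -- derivative of w = (ρ ∘ ν) * ν'
  set w : ℝ → ℝ := fun t => ρ (ν t) * ν' t with hw
  set D : ℝ → ℝ := fun t => ρ' (ν t) * ν' t ^ 2 + ρ (ν t) * ν'' t with hD
  have hwD : ∀ t ∈ Ico (0:ℝ) 1, HasDerivAt w (D t) t := by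
    intro t ht
    have h1 : HasDerivAt (fun t => ρ (ν t)) (ρ' (ν t) * ν' t) t :=
      (hρ_deriv (ν t) (hνnonneg t ht)).comp t (hν_deriv t ht)
    have h2 := h1.mul (hν_deriv2 t ht)
    have h3 : HasDerivAt w (ρ' (ν t) * ν' t * ν' t + ρ (ν t) * ν'' t) t := h2
    exact h3.congr_deriv (by simp only [hD]; ring)
  -- measurability
  have hνae : AEMeasurable ν μ01 :=
    (hνcont.mono Ioo_subset_Ico_self).aemeasurable measurableSet_Ioo
  have hν'sm : AEStronglyMeasurable ν' μ01 :=
    (hν'cont.mono Ioo_subset_Ico_self).aestronglyMeasurable measurableSet_Ioo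
  have hFν : AEStronglyMeasurable (fun s => F (ν s)) μ01 :=
    (hFmeas.measurable.comp_aemeasurable hνae).aestronglyMeasurable
  have hρcont : ContinuousOn ρ (Ici 0) :=
    fun x hx => (hρ_deriv x hx).continuousAt.continuousWithinAt
  have hρν : AEStronglyMeasurable (fun s => ρ (ν s)) μ01 :=
    ((hρcont.comp hνcont hν_maps).mono Ioo_subset_Ico_self).aestronglyMeasurable
      measurableSet_Ioo
  have hρ'ν : AEStronglyMeasurable (fun s => ρ' (ν s)) μ01 := by
    have hmk : AEStronglyMeasurable (fun s => deriv ρ (ν s)) μ01 :=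
      ((measurable_deriv ρ).comp_aemeasurable hνae).aestronglyMeasurable
    refine hmk.congr ?_
    filter_upwards [ae_restrict_mem measurableSet_Ioo] with s hs
    exact (hρ_deriv (ν s) (hνnonneg s (Ioo_subset_Ico_self hs))).deriv
  have hν''sm : AEStronglyMeasurable ν'' μ01 := by
    have hmk : AEStronglyMeasurable (deriv ν') μ01 :=
      (measurable_deriv ν').aestronglyMeasurable
    refine hmk.congr ?_
    filter_upwards [ae_restrict_mem measurableSet_Ioo] with s hs
    exact (hν_deriv2 s (Ioo_subset_Ico_self hs)).deriv
  have hD_sm : AEStronglyMeasurable D μ01 := by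
    have : AEStronglyMeasurable (fun s => ρ' (ν s) * (ν' s * ν' s) + ρ (ν s) * ν'' s) μ01 :=
      (hρ'ν.mul (hν'sm.mul hν'sm)).add (hρν.mul hν''sm)
    refine this.congr (Eventually.of_forall fun s => ?_)
    simp only [hD]; ring
  have hνqsm : AEStronglyMeasurable (fun s => ν s ^ q) μ01 :=
    ((Real.continuous_rpow_const hq0.le).measurable.comp_aemeasurable hνae).aestronglyMeasurable
  have hh₂sm : AEStronglyMeasurable h₂ μ01 := by
    refine (hD_sm.mul hνqsm).congr (Eventually.of_forall fun s => ?_)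
    rw [hh₂ s]; simp only [hD, Pi.mul_apply]
  -- continuity of f on [0, ∞) and of f ∘ ν
  have hfcont : ContinuousOn f (Ici 0) := by
    intro x hx
    have hprim : ContinuousWithinAt (fun b => ∫ u in (0:ℝ)..b, f' u) (Icc 0 (x+1)) x := by
      apply intervalIntegral.continuousWithinAt_primitive (measure_singleton x)
      rw [min_self]
      rcases lt_or_ge 0 (max (0:ℝ) (x+1)) with h | h
      · exact hf_int _ h
      · have : max (0:ℝ) (x+1) = 0 := le_antisymm h (le_max_left _ _)
        rw [this]
    have heq : ∀ y ∈ Icc (0:ℝ) (x+1), f y = ∫ u in (0:ℝ)..y, f' u :=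
      fun y hy => hf_repr y hy.1
    have hcwa : ContinuousWithinAt f (Icc 0 (x+1)) x := by
      refine hprim.congr heq (hf_repr x hx)
    refine hcwa.mono_of_mem_nhdsWithin ?_
    have : Icc (0:ℝ) (x+1) = Ici 0 ∩ Iic (x+1) := (Ici_inter_Iic).symm
    rw [this]
    exact inter_mem_nhdsWithin _ (Iic_mem_nhds (by linarith [hx.out]))
  have hfν : AEStronglyMeasurable (fun s => f (ν s)) μ01 :=
    ((hfcont.comp hνcont hν_maps).mono Ioo_subset_Ico_self).aestronglyMeasurable
      measurableSet_Ioo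

  -- Hölder: L¹ bound on initial segments
  have hpq_conj : p.HolderConjugate q⁻¹ := by
    rw [Real.holderConjugate_iff]; constructor
    · exact hp
    · rw [inv_inv, hq]; ring
  have hFnn : Measurable fun x => (‖F x‖₊ : ℝ≥0∞) :=
    hFmeas.measurable.nnnorm.coe_nnreal_ennreal
  have hHolder : ∀ X : ℝ, 0 ≤ X →
      ∫⁻ x in Ioo 0 X, (‖F x‖₊ : ℝ≥0∞) ≤ Nf * ENNReal.ofReal X ^ q := by
    intro X hX
    have hH := ENNReal.lintegral_mul_le_Lp_mul_Lq (volume.restrict (Ioo 0 X)) hpq_conj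
      hFnn.aemeasurable (aemeasurable_const (b := (1:ℝ≥0∞)))
    simp only [Pi.mul_apply, mul_one, ENNReal.one_rpow, lintegral_const,
      Measure.restrict_apply_univ] at hH
    refine hH.trans ?_
    rw [show (1:ℝ)/q⁻¹ = q by rw [one_div, inv_inv], one_mul, Real.volume_Ioo, sub_zero]
    gcongr
    calc (∫⁻ x in Ioo 0 X, (‖F x‖₊ : ℝ≥0∞) ^ p) ^ (1/p)
        ≤ (∫⁻ x in Ioi 0, (‖F x‖₊ : ℝ≥0∞) ^ p) ^ (1/p) := by
          gcongr
          exact Ioo_subset_Ioi_self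
      _ = Nf := by
          rw [← hNF, eLpNorm_eq_lintegral_rpow_enorm_toReal hP0 hPtop, hPtoReal]; rfl
  have hfbound : ∀ x : ℝ, 0 ≤ x → |f x| ≤ Nf.toReal * x ^ q := by
    intro x hx
    have hfx : f x = ∫ u in Ioo 0 x, F u := by
      rw [hf_repr x hx, intervalIntegral.integral_of_le hx, integral_Ioc_eq_integral_Ioo]
      exact integral_congr_ae (ae_restrict_of_ae_restrict_of_subset Ioo_subset_Ioi_self hFae)
    rw [hfx]
    have h1 : ‖∫ u in Ioo 0 x, F u‖ ≤ (∫⁻ u in Ioo 0 x, (‖F u‖₊ : ℝ≥0∞)).toReal := by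
      have := MeasureTheory.norm_integral_le_lintegral_norm (μ := volume.restrict (Ioo 0 x)) F
      simp only [ofReal_norm_eq_enorm] at this; exact this
    rw [← Real.norm_eq_abs]
    refine h1.trans ?_
    have h2 := hHolder x hx
    have h3 : (Nf * ENNReal.ofReal x ^ q).toReal = Nf.toReal * x ^ q := by
      rw [ENNReal.toReal_mul, ← ENNReal.toReal_rpow, ENNReal.toReal_ofReal hx]
    rw [← h3]
    refine ENNReal.toReal_mono ?_ h2
    exact ENNReal.mul_ne_top hNftop (ENNReal.rpow_lt_top_of_nonneg hq0.le ofReal_ne_top).ne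
  -- change of variables: representation of f ∘ ν
  set a : ℝ → ℝ := fun s => ν' s * F (ν s) with ha
  have hA : ∀ t ∈ Ioo (0:ℝ) 1, f (ν t) = ∫ s in Ioo 0 t, a s := by
    intro t ht
    have hνt0 : 0 ≤ ν t := hνnonneg t ⟨ht.1.le, ht.2⟩
    have hfx : f (ν t) = ∫ u in Ioo 0 (ν t), F u := by
      rw [hf_repr (ν t) hνt0, intervalIntegral.integral_of_le hνt0,
        integral_Ioc_eq_integral_Ioo]
      exact integral_congr_ae (ae_restrict_of_ae_restrict_of_subset Ioo_subset_Ioi_self hFae)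
    have hsub : Ioo (0:ℝ) t ⊆ Ico 0 1 := fun x hx => ⟨hx.1.le, hx.2.trans ht.2⟩
    have hcv : ∫ u in ν '' Ioo 0 t, F u = ∫ s in Ioo 0 t, |ν' s| • F (ν s) :=
      integral_image_eq_integral_abs_deriv_smul measurableSet_Ioo
        (fun x hx => (hν_deriv x (hsub hx)).hasDerivWithinAt)
        (hν_mono.injOn.mono hsub) F
    rw [himg t ht] at hcv
    rw [hfx, hcv]
    refine setIntegral_congr_fun measurableSet_Ioo fun s hs => ?_
    simp only [ha, smul_eq_mul, abs_of_nonneg (hν'nonneg s (hsub hs))]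

  -- the candidate derivative pieces and their L^p bounds
  set φ : ℝ → ℝ := fun s => F (ν s) * ν' s ^ (1 - q) with hφ'
  have hφsm : AEStronglyMeasurable φ μ01 := by
    simp only [hφ']
    exact hFν.mul
      (((hν'cont.rpow_const fun x hx => Or.inr (by linarith)).mono
        Ioo_subset_Ico_self).aestronglyMeasurable measurableSet_Ioo)
  have heφ : eLpNorm φ P μ01 = Nf := by
    rw [← hNF, eLpNorm_eq_lintegral_rpow_enorm_toReal hP0 hPtop,
      eLpNorm_eq_lintegral_rpow_enorm_toReal hP0 hPtop, hPtoReal]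
    simp only [enorm_eq_nnnorm]
    congr 1
    have hsub : Ioo (0:ℝ) 1 ⊆ Ico 0 1 := Ioo_subset_Ico_self
    have hcv := lintegral_image_eq_lintegral_abs_deriv_mul' measurableSet_Ioo
      (fun x hx => (hν_deriv x (hsub hx)).hasDerivWithinAt)
      (hν_mono.injOn.mono hsub) (fun x => (‖F x‖₊ : ℝ≥0∞) ^ p)
    rw [himg1] at hcv
    rw [hμ01, hcv]
    refine setLIntegral_congr_fun measurableSet_Ioo (fun s hs => ?_)
    have hr : 0 ≤ ν' s := hν'nonneg s (hsub hs)
    have h1 : (‖φ s‖₊ : ℝ≥0∞) = (‖F (ν s)‖₊ : ℝ≥0∞) * ENNReal.ofReal (ν' s ^ (1 - q)) := by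
      simp only [hφ', nnnorm_mul, ENNReal.coe_mul, ← enorm_eq_nnnorm,
        Real.enorm_eq_ofReal (Real.rpow_nonneg hr _)]
    rw [h1, ENNReal.mul_rpow_of_nonneg _ _ hp0.le,
      ENNReal.ofReal_rpow_of_nonneg (Real.rpow_nonneg hr _) hp0.le,
      ← Real.rpow_mul hr, show (1 - q) * p = 1 by rw [hq']; field_simp,
      Real.rpow_one, abs_of_nonneg hr, mul_comm]
  have hbound1 : eLpNorm (fun s => a s * w s) P μ01 ≤ C₁ * Nf := by
    have hbd : ∀ᵐ s ∂μ01, ‖a s * w s‖ ≤ ‖(C₁.toReal • φ) s‖ := by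
      filter_upwards [ae_le_eLpNormEssSup (f := h₁) (μ := μ01),
        ae_restrict_mem measurableSet_Ioo] with s hs1 hs2
      have hsI : s ∈ Ico (0:ℝ) 1 := Ioo_subset_Ico_self hs2
      have hr : 0 ≤ ν' s := hν'nonneg s hsI
      have hρp : 0 < ρ (ν s) := hρ_pos _ (hνnonneg s hsI)
      have hh₁le : h₁ s ≤ C₁.toReal := by
        have h2 : (‖h₁ s‖₊ : ℝ≥0∞) ≤ C₁ := by rw [hC₁, eLpNorm_exponent_top]; exact hs1
        have h3 := ENNReal.toReal_mono hC₁top h2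
        simp only [ENNReal.coe_toReal, coe_nnnorm, Real.norm_eq_abs] at h3
        exact (le_abs_self _).trans h3
      have hsplit : ν' s ^ (1+q) * ν' s ^ (1-q) = ν' s * ν' s := by
        rw [← Real.rpow_add' hr (by norm_num : (1+q) + (1-q) ≠ 0),
          show (1+q) + (1-q) = (2:ℝ) by ring, Real.rpow_two, pow_two]
      have hid : |a s| * |w s| = h₁ s * |φ s| := by
        have e1 : |a s| * |w s| = ρ (ν s) * |F (ν s)| * (ν' s * ν' s) := by
          simp only [ha, hw, abs_mul, abs_of_nonneg hr, abs_of_nonneg hρp.le]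
          ring
        have e2 : h₁ s * |φ s| = ρ (ν s) * |F (ν s)| * (ν' s ^ (1+q) * ν' s ^ (1-q)) := by
          simp only [hφ', hh₁ s, abs_mul, abs_of_nonneg (Real.rpow_nonneg hr (1-q))]
          ring
        rw [e1, e2, hsplit]
      simp only [Pi.smul_apply, smul_eq_mul, Real.norm_eq_abs, abs_mul,
        abs_of_nonneg (ENNReal.toReal_nonneg (a := C₁))]
      rw [hid]
      exact mul_le_mul_of_nonneg_right hh₁le (abs_nonneg _)
    calc eLpNorm (fun s => a s * w s) P μ01 ≤ eLpNorm (C₁.toReal • φ) P μ01 :=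
          eLpNorm_mono_ae hbd
      _ = (‖C₁.toReal‖₊ : ℝ≥0∞) * eLpNorm φ P μ01 := eLpNorm_const_smul _ _ _ _
      _ = C₁ * Nf := by
          rw [heφ, ← enorm_eq_nnnorm, Real.enorm_eq_ofReal ENNReal.toReal_nonneg,
            ENNReal.ofReal_toReal hC₁top]
  have hbound2 : eLpNorm (fun s => f (ν s) * D s) P μ01 ≤ C₂ * Nf := by
    have hbd : ∀ᵐ s ∂μ01, ‖f (ν s) * D s‖ ≤ ‖(Nf.toReal • h₂) s‖ := by
      filter_upwards [ae_restrict_mem measurableSet_Ioo] with s hs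
      have hsI : s ∈ Ico (0:ℝ) 1 := Ioo_subset_Ico_self hs
      have hν0' : 0 ≤ ν s := hνnonneg s hsI
      have habs : |h₂ s| = |D s| * ν s ^ q := by
        rw [hh₂ s, abs_mul, abs_of_nonneg (Real.rpow_nonneg hν0' q)]
      simp only [Pi.smul_apply, smul_eq_mul, Real.norm_eq_abs, abs_mul,
        abs_of_nonneg (ENNReal.toReal_nonneg (a := Nf))]
      calc |f (ν s)| * |D s| ≤ (Nf.toReal * ν s ^ q) * |D s| :=
            mul_le_mul_of_nonneg_right (hfbound _ hν0') (abs_nonneg _)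
        _ = Nf.toReal * |h₂ s| := by rw [habs]; ring
    calc eLpNorm (fun s => f (ν s) * D s) P μ01 ≤ eLpNorm (Nf.toReal • h₂) P μ01 :=
          eLpNorm_mono_ae hbd
      _ = (‖Nf.toReal‖₊ : ℝ≥0∞) * eLpNorm h₂ P μ01 := eLpNorm_const_smul _ _ _ _
      _ = C₂ * Nf := by
          rw [← hC₂, ← enorm_eq_nnnorm, Real.enorm_eq_ofReal ENNReal.toReal_nonneg,
            ENNReal.ofReal_toReal hNftop, mul_comm]
  -- the candidate derivative
  set G : ℝ → ℝ := fun s => a s * w s + f (ν s) * D s with hGdef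
  have hg1sm : AEStronglyMeasurable (fun s => a s * w s) μ01 := by
    simp only [ha, hw]
    exact (hν'sm.mul hFν).mul (hρν.mul hν'sm)
  have hg2sm : AEStronglyMeasurable (fun s => f (ν s) * D s) μ01 := hfν.mul hD_sm
  have hGsm : AEStronglyMeasurable G μ01 := hg1sm.add hg2sm
  have hGbound : eLpNorm G P μ01 ≤ (C₁ + C₂) * Nf :=
    calc eLpNorm G P μ01
        ≤ eLpNorm (fun s => a s * w s) P μ01 + eLpNorm (fun s => f (ν s) * D s) P μ01 :=
          eLpNorm_add_le hg1sm hg2sm hP1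
      _ ≤ C₁ * Nf + C₂ * Nf := add_le_add hbound1 hbound2
      _ = (C₁ + C₂) * Nf := (add_mul _ _ _).symm
  have hCCtop : (C₁ + C₂) * Nf < ⊤ :=
    ENNReal.mul_lt_top (ENNReal.add_lt_top.2 ⟨hh₁_fin, hh₂_fin⟩) hNftop.lt_top
  have hGtop : eLpNorm G P μ01 < ⊤ := lt_of_le_of_lt hGbound hCCtop
  -- integrability on (0,1)
  have hg1int : IntegrableOn (fun s => a s * w s) (Ioo 0 1) volume :=
    MemLp.integrable hP1 ⟨hg1sm, lt_of_le_of_lt hbound1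
      (ENNReal.mul_lt_top hh₁_fin hNftop.lt_top)⟩
  have hg2int : IntegrableOn (fun s => f (ν s) * D s) (Ioo 0 1) volume :=
    MemLp.integrable hP1 ⟨hg2sm, lt_of_le_of_lt hbound2
      (ENNReal.mul_lt_top hh₂_fin hNftop.lt_top)⟩
  have hGint : IntegrableOn G (Ioo 0 1) volume := hg1int.add hg2int
  have hh₂int : IntegrableOn h₂ (Ioo 0 1) volume := MemLp.integrable hP1 ⟨hh₂sm, hh₂_fin⟩
  -- auxiliary lintegral estimates
  have hInnerA : ∀ u ∈ Ioo (0:ℝ) 1,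
      ∫⁻ s in Ioo 0 u, (‖a s‖₊ : ℝ≥0∞) ≤ Nf * ENNReal.ofReal (ν u) ^ q := by
    intro u hu
    have hsub : Ioo (0:ℝ) u ⊆ Ico 0 1 := fun x hx => ⟨hx.1.le, hx.2.trans hu.2⟩
    have hcv := lintegral_image_eq_lintegral_abs_deriv_mul' measurableSet_Ioo
      (fun x hx => (hν_deriv x (hsub hx)).hasDerivWithinAt) (hν_mono.injOn.mono hsub)
      (fun x => (‖F x‖₊ : ℝ≥0∞))
    rw [himg u hu] at hcv
    have heq : ∫⁻ s in Ioo 0 u, (‖a s‖₊ : ℝ≥0∞) = ∫⁻ x in Ioo 0 (ν u), (‖F x‖₊ : ℝ≥0∞) := by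
      rw [hcv]
      refine setLIntegral_congr_fun measurableSet_Ioo (fun s hs => ?_)
      simp only [ha, nnnorm_mul, ENNReal.coe_mul, ← enorm_eq_nnnorm, Real.enorm_eq_ofReal_abs]
    rw [heq]
    exact hHolder (ν u) (hνnonneg u ⟨hu.1.le, hu.2⟩)

  have ha_sm : AEStronglyMeasurable a μ01 := by
    simp only [ha]; exact hν'sm.mul hFν
  have hDh₂ : ∀ u ∈ Ioo (0:ℝ) 1,
      (‖D u‖₊ : ℝ≥0∞) * ENNReal.ofReal (ν u) ^ q = (‖h₂ u‖₊ : ℝ≥0∞) := by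
    intro u hu
    have hν0' : 0 ≤ ν u := (hνpos u hu).le
    have habs : |h₂ u| = |D u| * ν u ^ q := by
      rw [hh₂ u, abs_mul, abs_of_nonneg (Real.rpow_nonneg hν0' q)]
    simp only [← enorm_eq_nnnorm, Real.enorm_eq_ofReal_abs]
    rw [habs, ENNReal.ofReal_rpow_of_nonneg hν0' hq0.le,
      ← ENNReal.ofReal_mul (abs_nonneg _)]
  -- the fundamental theorem of calculus for G on (0, t)
  have key : ∀ t ∈ Ioo (0:ℝ) 1, ∫ s in Ioo 0 t, G s = f (ν t) * w t := by
    intro t ht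
    have hsub01 : Ioo (0:ℝ) t ⊆ Ioo 0 1 := fun x hx => ⟨hx.1, hx.2.trans ht.2⟩
    have hsubI : Ioo (0:ℝ) t ⊆ Ico 0 1 := fun x hx => Ioo_subset_Ico_self (hsub01 hx)
    set μt := volume.restrict (Ioo (0:ℝ) t) with hμt
    haveI : IsFiniteMeasure μt := ⟨by simp [hμt, Real.volume_Ioo]⟩
    have hμtle : μt ≤ μ01 := by
      rw [hμt, hμ01]; exact Measure.restrict_mono hsub01 le_rfl
    have haint : IntegrableOn a (Ioo 0 t) volume := by
      have hFint : IntegrableOn F (Ioo 0 (ν t)) volume := by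
        haveI : IsFiniteMeasure (volume.restrict (Ioo (0:ℝ) (ν t))) :=
          ⟨by simp [Real.volume_Ioo]⟩
        exact MemLp.integrable hP1
          (hFLp.mono_measure (Measure.restrict_mono Ioo_subset_Ioi_self le_rfl))
      have h2 : IntegrableOn F (ν '' Ioo 0 t) volume := by rw [himg t ht]; exact hFint
      have h3 := (integrableOn_image_iff_integrableOn_abs_deriv_smul measurableSet_Ioo
        (fun x hx => (hν_deriv x (hsubI hx)).hasDerivWithinAt)
        (hν_mono.injOn.mono hsubI) F).1 h2
      refine h3.congr_fun (fun s hs => ?_) measurableSet_Ioo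
      simp [ha, smul_eq_mul, abs_of_nonneg (hν'nonneg s (hsubI hs))]
    have hwft : ∀ s ∈ Ioo (0:ℝ) t, ∫ u in Ioo s t, D u = w t - w s := by
      intro s hs
      have hst : s ≤ t := hs.2.le
      have hIccsub : Icc s t ⊆ Ico 0 1 :=
        fun x hx => ⟨hs.1.le.trans hx.1, lt_of_le_of_lt hx.2 ht.2⟩
      have hν_s_pos : 0 < ν s := hνpos s (hsub01 hs)
      have hsub2 : Ioc s t ⊆ Ioo 0 1 :=
        fun x hx => ⟨hs.1.trans hx.1, lt_of_le_of_lt hx.2 ht.2⟩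
      have hDint : IntegrableOn D (Ioc s t) volume := by
        have hbd : ∀ᵐ u ∂(volume.restrict (Ioc s t)),
            ‖D u‖ ≤ ‖((ν s ^ q)⁻¹ • h₂) u‖ := by
          filter_upwards [ae_restrict_mem measurableSet_Ioc] with u hu
          have huI : u ∈ Ico (0:ℝ) 1 := Ioo_subset_Ico_self (hsub2 hu)
          have hνu : ν s ≤ ν u :=
            hν_mono.monotoneOn ⟨hs.1.le, hs.2.trans ht.2⟩ huI hu.1.le
          have hνsq : 0 < ν s ^ q := Real.rpow_pos_of_pos hν_s_pos q
          have hνuq : ν s ^ q ≤ ν u ^ q :=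
            Real.rpow_le_rpow hν_s_pos.le hνu hq0.le
          have habs : |h₂ u| = |D u| * ν u ^ q := by
            rw [hh₂ u, abs_mul, abs_of_nonneg (Real.rpow_nonneg (hνnonneg u huI) q)]
          simp only [Pi.smul_apply, smul_eq_mul, Real.norm_eq_abs, abs_mul,
            abs_of_nonneg (inv_nonneg.2 hνsq.le), habs]
          calc |D u| = (ν s ^ q)⁻¹ * (|D u| * ν s ^ q) := by field_simp
            _ ≤ (ν s ^ q)⁻¹ * (|D u| * ν u ^ q) := by gcongr
        have hint2 : Integrable ((ν s ^ q)⁻¹ • h₂) (volume.restrict (Ioc s t)) :=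
          (hh₂int.mono_set hsub2).smul _
        exact hint2.mono (hD_sm.mono_measure
          (by rw [hμ01]; exact Measure.restrict_mono hsub2 le_rfl)) hbd
      have hD_ii : IntervalIntegrable D volume s t :=
        (intervalIntegrable_iff_integrableOn_Ioc_of_le hst).2 hDint
      have hderiv : ∀ x ∈ uIcc s t, HasDerivAt w (D x) x := by
        intro x hx
        rw [uIcc_of_le hst] at hx
        exact hwD x (hIccsub hx)
      have hFTC := intervalIntegral.integral_eq_sub_of_hasDerivAt hderiv hD_ii
      rw [intervalIntegral.integral_of_le hst, integral_Ioc_eq_integral_Ioo] at hFTC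
      exact hFTC
    -- Fubini setup
    set k : ℝ → ℝ → ℝ := fun u s => if s < u then a s * D u else 0 with hk
    have hksm : AEStronglyMeasurable (Function.uncurry k) (μt.prod μt) := by
      have h1 : AEStronglyMeasurable (fun z : ℝ × ℝ => a z.2) (μt.prod μt) := by
        have haμt : AEStronglyMeasurable a ((μt.prod μt).map Prod.snd) := by
          rw [Measure.map_snd_prod]
          exact (ha_sm.mono_measure hμtle).mono_ac Measure.smul_absolutelyContinuous
        exact haμt.comp_measurable measurable_snd
      have h2 : AEStronglyMeasurable (fun z : ℝ × ℝ => D z.1) (μt.prod μt) := by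
        have hDμt : AEStronglyMeasurable D ((μt.prod μt).map Prod.fst) := by
          rw [Measure.map_fst_prod]
          exact (hD_sm.mono_measure hμtle).mono_ac Measure.smul_absolutelyContinuous
        exact hDμt.comp_measurable measurable_fst
      have h3 : MeasurableSet {z : ℝ × ℝ | z.2 < z.1} :=
        measurableSet_lt measurable_snd measurable_fst
      refine ((h1.mul h2).indicator h3).congr (Eventually.of_forall fun z => ?_)
      by_cases hz : z.2 < z.1 <;>
        simp [Function.uncurry, hk, indicator, hz, Set.mem_setOf_eq]
    have hkfin : HasFiniteIntegral (Function.uncurry k) (μt.prod μt) := by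
      have hlin : ∫⁻ z, (‖Function.uncurry k z‖₊ : ℝ≥0∞) ∂(μt.prod μt) < ⊤ := by
        rw [lintegral_prod (fun z => (‖Function.uncurry k z‖₊ : ℝ≥0∞)) hksm.enorm]
        have hb : ∀ u ∈ Ioo (0:ℝ) t,
            ∫⁻ s, (‖Function.uncurry k (u, s)‖₊ : ℝ≥0∞) ∂μt ≤
              Nf * (‖h₂ u‖₊ : ℝ≥0∞) := by
          intro u hu
          have huu : Ioo (0:ℝ) u ⊆ Ioo 0 1 := fun x hx => ⟨hx.1, hx.2.trans (hsub01 hu).2⟩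
          have e1 : ∀ s, (‖Function.uncurry k (u, s)‖₊ : ℝ≥0∞) =
              (Iio u).indicator (fun s => (‖a s‖₊ : ℝ≥0∞) * (‖D u‖₊ : ℝ≥0∞)) s := by
            intro s
            by_cases hs : s < u <;>
              simp [Function.uncurry, hk, indicator, hs, mem_Iio, nnnorm_mul,
                ENNReal.coe_mul]
          have hset : Iio u ∩ Ioo (0:ℝ) t = Ioo 0 u := by
            ext x; simp only [mem_inter_iff, mem_Iio, mem_Ioo]
            constructor
            · rintro ⟨h1, h2, h3⟩; exact ⟨h2, h1⟩
            · rintro ⟨h1, h2⟩; exact ⟨h2, h1, h2.trans hu.2⟩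
          calc ∫⁻ s, (‖Function.uncurry k (u, s)‖₊ : ℝ≥0∞) ∂μt
              = ∫⁻ s in Iio u ∩ Ioo 0 t, (‖a s‖₊ : ℝ≥0∞) * (‖D u‖₊ : ℝ≥0∞) := by
                rw [hμt]
                simp_rw [e1]
                rw [lintegral_indicator measurableSet_Iio,
                  Measure.restrict_restrict measurableSet_Iio]
            _ = ∫⁻ s in Ioo 0 u, (‖a s‖₊ : ℝ≥0∞) * (‖D u‖₊ : ℝ≥0∞) := by rw [hset]
            _ = (∫⁻ s in Ioo 0 u, (‖a s‖₊ : ℝ≥0∞)) * (‖D u‖₊ : ℝ≥0∞) := by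
                refine lintegral_mul_const'' _ ?_
                exact (ha_sm.mono_measure
                  (by rw [hμ01]; exact Measure.restrict_mono huu le_rfl)).enorm
            _ ≤ (Nf * ENNReal.ofReal (ν u) ^ q) * (‖D u‖₊ : ℝ≥0∞) := by
                gcongr
                exact hInnerA u (hsub01 hu)
            _ = Nf * (‖h₂ u‖₊ : ℝ≥0∞) := by
                rw [mul_assoc, mul_comm (ENNReal.ofReal (ν u) ^ q), hDh₂ u (hsub01 hu)]
        calc ∫⁻ u, (∫⁻ s, (‖Function.uncurry k (u, s)‖₊ : ℝ≥0∞) ∂μt) ∂μt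
            ≤ ∫⁻ u in Ioo 0 t, Nf * (‖h₂ u‖₊ : ℝ≥0∞) := by
              rw [hμt]
              refine lintegral_mono_ae ?_
              filter_upwards [ae_restrict_mem measurableSet_Ioo] with u hu
              exact hb u hu
          _ ≤ ∫⁻ u in Ioo 0 1, Nf * (‖h₂ u‖₊ : ℝ≥0∞) :=
              lintegral_mono_set hsub01
          _ = Nf * ∫⁻ u in Ioo 0 1, (‖h₂ u‖₊ : ℝ≥0∞) :=
              lintegral_const_mul' _ _ hNftop
          _ < ⊤ := ENNReal.mul_lt_top hNftop.lt_top hh₂int.hasFiniteIntegral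
      exact hlin
    have hkint : Integrable (Function.uncurry k) (μt.prod μt) := ⟨hksm, hkfin⟩
    have hswap := integral_integral_swap hkint
    have hLHS : (∫ u, ∫ s, k u s ∂μt ∂μt) = ∫ u in Ioo 0 t, f (ν u) * D u := by
      rw [hμt]
      refine setIntegral_congr_fun measurableSet_Ioo fun u hu => ?_
      have e1 : ∀ s, k u s = (Iio u).indicator (fun s => a s * D u) s := by
        intro s; by_cases hs : s < u <;> simp [hk, indicator, hs, mem_Iio]
      have hset : Ioo (0:ℝ) t ∩ Iio u = Ioo 0 u := by
        ext x; simp only [mem_inter_iff, mem_Iio, mem_Ioo]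
        constructor
        · rintro ⟨⟨h1, h2⟩, h3⟩; exact ⟨h1, h3⟩
        · rintro ⟨h1, h2⟩; exact ⟨⟨h1, h2.trans hu.2⟩, h2⟩
      calc ∫ s, k u s ∂(volume.restrict (Ioo 0 t))
          = ∫ s in Ioo 0 t, (Iio u).indicator (fun s => a s * D u) s := by simp_rw [e1]
        _ = ∫ s in Ioo 0 t ∩ Iio u, a s * D u := setIntegral_indicator measurableSet_Iio
        _ = ∫ s in Ioo 0 u, a s * D u := by rw [hset]
        _ = (∫ s in Ioo 0 u, a s) * D u := by rw [integral_mul_const]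
        _ = f (ν u) * D u := by rw [← hA u (hsub01 hu)]
    have hRHS : (∫ s, ∫ u, k u s ∂μt ∂μt) =
        (∫ s in Ioo 0 t, a s) * w t - ∫ s in Ioo 0 t, a s * w s := by
      rw [hμt]
      have hstep : ∀ s ∈ Ioo (0:ℝ) t,
          (∫ u in Ioo 0 t, k u s) = a s * w t - a s * w s := by
        intro s hs
        have e1 : ∀ u, k u s = (Ioi s).indicator (fun u => a s * D u) u := by
          intro u; by_cases hus : s < u <;> simp [hk, indicator, hus, mem_Ioi]
        have hset3 : Ioo (0:ℝ) t ∩ Ioi s = Ioo s t := by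
          ext x; simp only [mem_inter_iff, mem_Ioo, mem_Ioi]
          constructor
          · rintro ⟨⟨h1, h2⟩, h3⟩; exact ⟨h3, h2⟩
          · rintro ⟨h1, h2⟩; exact ⟨⟨hs.1.trans h1, h2⟩, h1⟩
        calc ∫ u in Ioo 0 t, k u s
            = ∫ u in Ioo 0 t, (Ioi s).indicator (fun u => a s * D u) u := by simp_rw [e1]
          _ = ∫ u in Ioo 0 t ∩ Ioi s, a s * D u := setIntegral_indicator measurableSet_Ioi
          _ = ∫ u in Ioo s t, a s * D u := by rw [hset3]
          _ = a s * ∫ u in Ioo s t, D u := by rw [integral_const_mul]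
          _ = a s * (w t - w s) := by rw [hwft s hs]
          _ = a s * w t - a s * w s := by ring
      calc ∫ s in Ioo 0 t, (∫ u in Ioo 0 t, k u s)
          = ∫ s in Ioo 0 t, (a s * w t - a s * w s) :=
            setIntegral_congr_fun measurableSet_Ioo hstep
        _ = (∫ s in Ioo 0 t, a s * w t) - ∫ s in Ioo 0 t, a s * w s :=
            integral_sub (haint.mul_const _) (hg1int.mono_set hsub01)
        _ = (∫ s in Ioo 0 t, a s) * w t - ∫ s in Ioo 0 t, a s * w s := by
            rw [integral_mul_const]
    have hg2eq : ∫ s in Ioo 0 t, f (ν s) * D s =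
        f (ν t) * w t - ∫ s in Ioo 0 t, a s * w s := by
      rw [← hLHS, hswap, hRHS, ← hA t ht]
    calc ∫ s in Ioo 0 t, G s
        = (∫ s in Ioo 0 t, a s * w s) + ∫ s in Ioo 0 t, f (ν s) * D s :=
          integral_add (hg1int.mono_set hsub01) (hg2int.mono_set hsub01)
      _ = f (ν t) * w t := by rw [hg2eq]; ring
  -- assemble the final statement
  refine ⟨by rw [hg 0, hν0, hf0]; ring, G, ?_, hGbound, hGtop⟩
  intro t ht
  rcases eq_or_lt_of_le ht.1 with h0 | h0
  · refine ⟨?_, ?_⟩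
    · rw [← h0]
    · rw [← h0, intervalIntegral.integral_same, hg 0, hν0, hf0]; ring
  · have hto : t ∈ Ioo (0:ℝ) 1 := ⟨h0, ht.2⟩
    refine ⟨?_, ?_⟩
    · rw [intervalIntegrable_iff_integrableOn_Ioo_of_le ht.1]
      exact hGint.mono_set (fun x hx => ⟨hx.1, hx.2.trans ht.2⟩)
    · rw [intervalIntegral.integral_of_le ht.1, integral_Ioc_eq_integral_Ioo,
        key t hto, hg t]
      simp only [hw]; ring
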